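/- Let G and H be groups and let g = (g₁,…,g_n) ∈ Gⁿ and h = (h₁,…,h_n) ∈ Hⁿ be tuples such that for every group word w in n variables, w(g) = 1 in G iff w(h) = 1 in H. For ℓ = 1,…,m fix complex coefficients b_{s,ℓ} (s = 1,…,p_ℓ) and indices i(s,ℓ) ∈ {1,…,n}, and define y_ℓ = Σ_s b_{s,ℓ}·g_{i(s,ℓ)} in the group algebra ℂ[G] and z_ℓ = Σ_s b_{s,ℓ}·h_{i(s,ℓ)} in ℂ[H]. Then for every *-polynomial p in m noncommuting variables, the coefficient at the group identity of p(y₁,…,y_m) in ℂ[G] equals the coefficient at the identity of p(z₁,…,z_m) in ℂ[H]. -/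

import Mathlib

/-- Tuples `g` and `h` satisfy the same group-word equations. -/
def WordEq {ι : Type*} (G H : Type*) [Group G] [Group H]
    (g : ι → G) (h : ι → H) : Prop :=
  ∀ w : FreeGroup ι, FreeGroup.lift g w = 1 ↔ FreeGroup.lift h w = 1

/-- Evaluation of a `*`-polynomial (a noncommutative polynomial in variables
`(ℓ, false)` and their formal adjoints `(ℓ, true)`) in a group algebra, where the
variable `ℓ` is sent to `y ℓ` and its formal adjoint to the star of `y ℓ`. -/
noncomputable def starPolyEval {G : Type*} [Group G] {m : ℕ}
    (y yStar : Fin m → MonoidAlgebra ℂ G) (P : FreeAlgebra ℂ (Fin m × Bool)) :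
    MonoidAlgebra ℂ G :=
  FreeAlgebra.lift ℂ (fun v : Fin m × Bool => if v.2 then yStar v.1 else y v.1) P

lemma starPolyEval_factor {G : Type*} [Group G] {n m : ℕ}
    (g : Fin n → G) (p : Fin m → ℕ) (b : ∀ ℓ, Fin (p ℓ) → ℂ) (idx : ∀ ℓ, Fin (p ℓ) → Fin n)
    (y yStar : Fin m → MonoidAlgebra ℂ G)
    (hy : ∀ ℓ, y ℓ = ∑ s, MonoidAlgebra.single (g (idx ℓ s)) (b ℓ s))
    (hyStar : ∀ ℓ, yStar ℓ = ∑ s, MonoidAlgebra.single (g (idx ℓ s))⁻¹ (starRingEnd ℂ (b ℓ s)))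
    (P : FreeAlgebra ℂ (Fin m × Bool)) :
    starPolyEval y yStar P =
      MonoidAlgebra.mapDomainAlgHom ℂ ℂ (FreeGroup.lift g)
        (FreeAlgebra.lift ℂ (fun v : Fin m × Bool =>
          if v.2 then ∑ s, MonoidAlgebra.single (FreeGroup.of (idx v.1 s))⁻¹
            (starRingEnd ℂ (b v.1 s))
          else ∑ s, MonoidAlgebra.single (FreeGroup.of (idx v.1 s)) (b v.1 s)) P) := by
  show (FreeAlgebra.lift ℂ _) P =
    ((MonoidAlgebra.mapDomainAlgHom ℂ ℂ (FreeGroup.lift g)).comp (FreeAlgebra.lift ℂ _)) P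
  congr 1
  apply FreeAlgebra.hom_ext
  funext v
  obtain ⟨ℓ, b'⟩ := v
  cases b' <;>
    simp [FreeAlgebra.lift_ι_apply, hy, hyStar, map_sum, Finsupp.mapDomain_single]

/-- If the tuples `g` and `h` satisfy the same group-word equations, then the
corresponding linear combinations of group elements in the group algebras have the same
trace (coefficient at the identity) under every `*`-polynomial. -/
theorem trace_starPoly_eq {G H : Type*} [Group G] [Group H] {n : ℕ}
    (g : Fin n → G) (h : Fin n → H) (h0 : WordEq G H g h)
    {m : ℕ} (p : Fin m → ℕ) (b : ∀ ℓ, Fin (p ℓ) → ℂ) (idx : ∀ ℓ, Fin (p ℓ) → Fin n)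
    (y : Fin m → MonoidAlgebra ℂ G) (z : Fin m → MonoidAlgebra ℂ H)
    (hy : ∀ ℓ, y ℓ = ∑ s, MonoidAlgebra.single (g (idx ℓ s)) (b ℓ s))
    (hz : ∀ ℓ, z ℓ = ∑ s, MonoidAlgebra.single (h (idx ℓ s)) (b ℓ s))
    (yStar : Fin m → MonoidAlgebra ℂ G) (zStar : Fin m → MonoidAlgebra ℂ H)
    (hyStar : ∀ ℓ, yStar ℓ = ∑ s, MonoidAlgebra.single (g (idx ℓ s))⁻¹ (starRingEnd ℂ (b ℓ s)))
    (hzStar : ∀ ℓ, zStar ℓ = ∑ s, MonoidAlgebra.single (h (idx ℓ s))⁻¹ (starRingEnd ℂ (b ℓ s)))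
    (P : FreeAlgebra ℂ (Fin m × Bool)) :
    (starPolyEval y yStar P).coeff 1 = (starPolyEval z zStar P).coeff 1 := by
  classical
  set Q := FreeAlgebra.lift ℂ (fun v : Fin m × Bool =>
      if v.2 then ∑ s, MonoidAlgebra.single (FreeGroup.of (idx v.1 s))⁻¹
        (starRingEnd ℂ (b v.1 s))
      else ∑ s, MonoidAlgebra.single (FreeGroup.of (idx v.1 s)) (b v.1 s)) P with hQ
  rw [starPolyEval_factor g p b idx y yStar hy hyStar P,
      starPolyEval_factor h p b idx z zStar hz hzStar P]
  show Finsupp.mapDomain (FreeGroup.lift g) Q.coeff 1 = Finsupp.mapDomain (FreeGroup.lift h) Q.coeff 1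
  rw [Finsupp.mapDomain, Finsupp.mapDomain, Finsupp.sum_apply, Finsupp.sum_apply]
  refine Finsupp.sum_congr fun w _ => ?_
  rw [Finsupp.single_apply, Finsupp.single_apply]
  by_cases hw : FreeGroup.lift g w = 1
  · rw [if_pos hw, if_pos ((h0 w).mp hw)]
  · rw [if_neg hw, if_neg fun hc => hw ((h0 w).mpr hc)]
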